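/- Let d ∈ ℕ and let f : {−1,+1}^d → {−1,+1} be monotone. For α ∈ {0,1}^d define the Fourier–Walsh coefficient f̂(α) = 2^{−d} Σ_{x ∈ {−1,+1}^d} x^α f(x), where x^α = ∏_{j=1}^d x_j^{α_j}. Then for every k ∈ ℕ₀: Σ_{α ∈ {0,1}^d, |α|₁ > k} f̂(α)² ≤ √d / (k+1), where |α|₁ = α₁ + ⋯ + α_d. -/

import Mathlib

/-- The Fourier–Walsh character `x ↦ x^α` on `{-1,+1}^d`, where `{-1,+1}` is encoded
by `Bool` (`true ↦ +1`, `false ↦ -1`). -/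
noncomputable def chi (d : ℕ) (α x : Fin d → Bool) : ℝ :=
  ∏ j, if α j then (if x j then (1 : ℝ) else -1) else 1

namespace Stmt14

noncomputable def sgn (b : Bool) : ℝ := if b then 1 else -1

lemma chi_eq (d : ℕ) (α x : Fin d → Bool) :
    chi d α x = ∏ j, if α j then sgn (x j) else 1 := rfl

lemma prodsum (d : ℕ) (g : Fin d → Bool → ℝ) :
    ∑ x : Fin d → Bool, ∏ j, g j (x j) = ∏ j, (g j true + g j false) := by
  classical
  rw [show (Finset.univ : Finset (Fin d → Bool))
      = Fintype.piFinset (fun _ => Finset.univ) from (Fintype.piFinset_univ).symm,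
    ← Finset.prod_univ_sum]
  simp [Fintype.sum_bool]

lemma char_sum (d : ℕ) (x y : Fin d → Bool) :
    ∑ α : Fin d → Bool, chi d α x * chi d α y = if x = y then (2:ℝ)^d else 0 := by
  have h1 : ∀ α : Fin d → Bool, chi d α x * chi d α y
      = ∏ j, (fun j a => if a then sgn (x j) * sgn (y j) else (1:ℝ)) j (α j) := by
    intro α
    rw [chi_eq, chi_eq, ← Finset.prod_mul_distrib]
    exact Finset.prod_congr rfl (fun j _ => by cases α j <;> simp)
  have h2 := prodsum d (fun j a => if a then sgn (x j) * sgn (y j) else (1:ℝ))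
  simp only [ite_true, ite_false] at h2
  rw [Finset.sum_congr rfl (fun α _ => h1 α), h2]
  by_cases h : x = y
  · subst h
    rw [if_pos rfl]
    have : ∀ j : Fin d, sgn (x j) * sgn (x j) + 1 = 2 := by
      intro j; cases x j <;> simp [sgn] <;> norm_num
    simp [this]
  · obtain ⟨j, hj⟩ : ∃ j, x j ≠ y j := by
      by_contra hc; push_neg at hc; exact h (funext hc)
    rw [if_neg h]
    apply Finset.prod_eq_zero (Finset.mem_univ j)
    cases hxj : x j <;> cases hyj : y j <;> simp_all [sgn] <;> norm_num


lemma parseval (d : ℕ) (F : (Fin d → Bool) → ℝ) :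
    ∑ α : Fin d → Bool, (∑ x : Fin d → Bool, chi d α x * F x)^2
      = 2^d * ∑ x : Fin d → Bool, (F x)^2 := by
  have h1 : ∀ α : Fin d → Bool, (∑ x : Fin d → Bool, chi d α x * F x)^2
      = ∑ x : Fin d → Bool, ∑ y : Fin d → Bool, (F x * F y) * (chi d α x * chi d α y) := by
    intro α
    rw [sq, Finset.sum_mul_sum]
    exact Finset.sum_congr rfl fun x _ => Finset.sum_congr rfl fun y _ => by ring
  rw [Finset.sum_congr rfl (fun α _ => h1 α)]
  rw [Finset.sum_comm]
  have h2 : ∀ x : Fin d → Bool,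
      (∑ α : Fin d → Bool, ∑ y : Fin d → Bool, (F x * F y) * (chi d α x * chi d α y))
      = 2^d * (F x)^2 := by
    intro x
    rw [Finset.sum_comm]
    have h3 : ∀ y : Fin d → Bool,
        (∑ α : Fin d → Bool, (F x * F y) * (chi d α x * chi d α y))
        = (F x * F y) * (if x = y then (2:ℝ)^d else 0) := by
      intro y
      rw [← Finset.mul_sum, char_sum]
    rw [Finset.sum_congr rfl (fun y _ => h3 y)]
    simp [Finset.sum_ite_eq, sq]
    ring
  rw [Finset.sum_congr rfl (fun x _ => h2 x), ← Finset.mul_sum]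


lemma char_sum_filter (d : ℕ) (j : Fin d) (x y : Fin d → Bool) :
    ∑ α ∈ Finset.univ.filter (fun α : Fin d → Bool => α j = true),
      chi d α x * chi d α y
    = (sgn (x j) * sgn (y j)) *
        ∏ l ∈ Finset.univ.erase j, (sgn (x l) * sgn (y l) + 1) := by
  classical
  set c : Fin d → Bool → ℝ :=
    fun l a => if a then sgn (x l) * sgn (y l) else (if l = j then 0 else 1) with hc
  have h1 : ∀ α : Fin d → Bool,
      (if α j = true then chi d α x * chi d α y else 0) = ∏ l, c l (α l) := by
    intro α
    by_cases hα : α j = true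
    · rw [if_pos hα, chi_eq, chi_eq, ← Finset.prod_mul_distrib]
      refine Finset.prod_congr rfl fun l _ => ?_
      rcases hb : α l with _ | _
      · have : l ≠ j := by rintro rfl; rw [hα] at hb; exact Bool.noConfusion hb
        simp [hc, hb, this]
      · simp [hc, hb]
    · rw [if_neg hα]
      refine (Finset.prod_eq_zero (Finset.mem_univ j) ?_).symm
      have hb : α j = false := by simpa using hα
      simp [hc, hb]
  rw [Finset.sum_filter, Finset.sum_congr rfl (fun α _ => h1 α), prodsum d c,
    ← Finset.mul_prod_erase Finset.univ _ (Finset.mem_univ j)]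
  have hj : c j true + c j false = sgn (x j) * sgn (y j) := by simp [hc]
  rw [hj]
  congr 1
  refine Finset.prod_congr rfl fun l hl => ?_
  have hlj : l ≠ j := (Finset.mem_erase.mp hl).1
  simp [hc, hlj]


lemma filter_agree (d : ℕ) (j : Fin d) (x : Fin d → Bool) :
    Finset.univ.filter (fun y : Fin d → Bool => ∀ l, l ≠ j → y l = x l)
      = {Function.update x j true, Function.update x j false} := by
  classical
  ext y
  simp only [Finset.mem_filter, Finset.mem_univ, true_and, Finset.mem_insert,
    Finset.mem_singleton]
  constructor
  · intro h
    have hy : y = Function.update x j (y j) := by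
      funext l
      by_cases hl : l = j
      · subst hl; simp [Function.update]
      · simp [Function.update, hl, h l hl]
    rcases hb : y j with _ | _
    · right; rw [hy, hb]
    · left; rw [hy, hb]
  · rintro (rfl | rfl) l hl <;> simp [Function.update, hl]

lemma sum_upd (d : ℕ) (j : Fin d) (b : Bool) (h : (Fin d → Bool) → ℝ) :
    ∑ x ∈ Finset.univ.filter (fun x : Fin d → Bool => x j = !b),
        h (Function.update x j b)
    = ∑ x ∈ Finset.univ.filter (fun x : Fin d → Bool => x j = b), h x := by
  classical
  refine Finset.sum_nbij' (fun x => Function.update x j b)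
    (fun x => Function.update x j (!b)) ?_ ?_ ?_ ?_ ?_
  · intro a ha
    simp only [Finset.mem_filter, Finset.mem_univ, true_and] at *
    simp [Function.update]
  · intro a ha
    simp only [Finset.mem_filter, Finset.mem_univ, true_and] at *
    simp [Function.update]
  · intro a ha
    simp only [Finset.mem_filter, Finset.mem_univ, true_and] at ha
    funext l
    by_cases hl : l = j
    · subst hl; simp [Function.update, ha]
    · simp [Function.update, hl]
  · intro a ha
    simp only [Finset.mem_filter, Finset.mem_univ, true_and] at ha
    funext l
    by_cases hl : l = j
    · subst hl; simp [Function.update, ha]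
    · simp [Function.update, hl]
  · intro a ha
    rfl

lemma pairsum (d : ℕ) (j : Fin d) (h : (Fin d → Bool) → ℝ) :
    2 * ∑ x : Fin d → Bool, h x
      = ∑ x : Fin d → Bool,
          (h (Function.update x j true) + h (Function.update x j false)) := by
  classical
  have split : ∀ g : (Fin d → Bool) → ℝ, ∑ x : Fin d → Bool, g x
      = ∑ x ∈ Finset.univ.filter (fun x : Fin d → Bool => x j = true), g x
        + ∑ x ∈ Finset.univ.filter (fun x : Fin d → Bool => x j = false), g x := by
    intro g
    rw [← Finset.sum_filter_add_sum_filter_not Finset.univ (fun x => x j = true)]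
    congr 1
    apply Finset.sum_congr _ (fun _ _ => rfl)
    apply Finset.filter_congr
    intro x _
    simp
  have keyT : ∑ x : Fin d → Bool, h (Function.update x j true)
      = 2 * ∑ x ∈ Finset.univ.filter (fun x : Fin d → Bool => x j = true), h x := by
    rw [split (fun x => h (Function.update x j true))]
    have e1 : ∑ x ∈ Finset.univ.filter (fun x : Fin d → Bool => x j = true),
        h (Function.update x j true)
        = ∑ x ∈ Finset.univ.filter (fun x : Fin d → Bool => x j = true), h x := by
      refine Finset.sum_congr rfl fun x hx => ?_
      simp only [Finset.mem_filter, Finset.mem_univ, true_and] at hx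
      congr 1
      funext l
      by_cases hl : l = j
      · subst hl; simp [Function.update, hx]
      · simp [Function.update, hl]
    have e2 := sum_upd d j true h
    simp only [Bool.not_true] at e2
    rw [e1, e2]
    ring
  have keyF : ∑ x : Fin d → Bool, h (Function.update x j false)
      = 2 * ∑ x ∈ Finset.univ.filter (fun x : Fin d → Bool => x j = false), h x := by
    rw [split (fun x => h (Function.update x j false))]
    have e1 : ∑ x ∈ Finset.univ.filter (fun x : Fin d → Bool => x j = false),
        h (Function.update x j false)
        = ∑ x ∈ Finset.univ.filter (fun x : Fin d → Bool => x j = false), h x := by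
      refine Finset.sum_congr rfl fun x hx => ?_
      simp only [Finset.mem_filter, Finset.mem_univ, true_and] at hx
      congr 1
      funext l
      by_cases hl : l = j
      · subst hl; simp [Function.update, hx]
      · simp [Function.update, hl]
    have e2 := sum_upd d j false h
    simp only [Bool.not_false] at e2
    rw [e1, e2]
    ring
  rw [Finset.sum_add_distrib, keyT, keyF, split h]
  ring


lemma sq_expand (d : ℕ) (F : (Fin d → Bool) → ℝ) (α : Fin d → Bool) :
    (∑ x : Fin d → Bool, chi d α x * F x)^2
    = ∑ x : Fin d → Bool, ∑ y : Fin d → Bool, (F x * F y) * (chi d α x * chi d α y) := by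
  rw [sq, Finset.sum_mul_sum]
  exact Finset.sum_congr rfl fun x _ => Finset.sum_congr rfl fun y _ => by ring

lemma erase_prod (d : ℕ) (j : Fin d) (x y : Fin d → Bool) :
    ∏ l ∈ Finset.univ.erase j, (sgn (x l) * sgn (y l) + 1)
    = if (∀ l, l ≠ j → x l = y l) then (2:ℝ)^(d-1) else 0 := by
  classical
  by_cases h : ∀ l, l ≠ j → x l = y l
  · rw [if_pos h]
    have h2 : ∀ l ∈ Finset.univ.erase j, sgn (x l) * sgn (y l) + 1 = 2 := by
      intro l hl
      rw [h l (Finset.mem_erase.mp hl).1]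
      cases y l <;> simp [sgn] <;> norm_num
    rw [Finset.prod_congr rfl h2, Finset.prod_const]
    congr 1
    rw [Finset.card_erase_of_mem (Finset.mem_univ j), Finset.card_univ, Fintype.card_fin]
  · rw [if_neg h]
    push_neg at h
    obtain ⟨l, hlj, hxy⟩ := h
    apply Finset.prod_eq_zero (Finset.mem_erase.mpr ⟨hlj, Finset.mem_univ l⟩)
    rcases hx : x l with _|_ <;> rcases hy : y l with _|_ <;>
      simp_all [sgn] <;> norm_num


lemma influence_raw (d : ℕ) (hd : 1 ≤ d) (j : Fin d) (f : (Fin d → Bool) → ℝ)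
    (hval : ∀ x, f x = 1 ∨ f x = -1)
    (hmono : ∀ x z : Fin d → Bool, (∀ l, x l ≤ z l) → f x ≤ f z) :
    ∑ α ∈ Finset.univ.filter (fun α : Fin d → Bool => α j = true),
      (∑ x : Fin d → Bool, chi d α x * f x)^2
    = 2^d * ∑ x : Fin d → Bool, sgn (x j) * f x := by
  classical
  have hne : ∀ x : Fin d → Bool,
      Function.update x j true ≠ Function.update x j false := by
    intro x hcon
    have := congrFun hcon j
    simp [Function.update] at this
  -- Step 1: expand
  have step1 : ∑ α ∈ Finset.univ.filter (fun α : Fin d → Bool => α j = true),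
      (∑ x : Fin d → Bool, chi d α x * f x)^2
      = ∑ x : Fin d → Bool, ∑ y : Fin d → Bool, (f x * f y) *
          ((sgn (x j) * sgn (y j)) *
            ∏ l ∈ Finset.univ.erase j, (sgn (x l) * sgn (y l) + 1)) := by
    rw [Finset.sum_congr rfl (fun α _ => sq_expand d f α), Finset.sum_comm]
    refine Finset.sum_congr rfl fun x _ => ?_
    rw [Finset.sum_comm]
    refine Finset.sum_congr rfl fun y _ => ?_
    rw [← Finset.mul_sum, char_sum_filter]
  -- Step 2: inner sum over y
  have step2 : ∀ x : Fin d → Bool,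
      ∑ y : Fin d → Bool, (f x * f y) *
          ((sgn (x j) * sgn (y j)) *
            ∏ l ∈ Finset.univ.erase j, (sgn (x l) * sgn (y l) + 1))
      = 2^(d-1) * (f x * sgn (x j) *
          (f (Function.update x j true) - f (Function.update x j false))) := by
    intro x
    have e : ∀ y : Fin d → Bool, (f x * f y) *
        ((sgn (x j) * sgn (y j)) *
          ∏ l ∈ Finset.univ.erase j, (sgn (x l) * sgn (y l) + 1))
        = if (∀ l, l ≠ j → y l = x l)
            then (f x * f y * sgn (x j) * sgn (y j) * 2^(d-1)) else 0 := by
      intro y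
      rw [erase_prod]
      by_cases hP : ∀ l, l ≠ j → y l = x l
      · rw [if_pos (fun l hl => (hP l hl).symm), if_pos hP]; ring
      · rw [if_neg (fun h' => hP fun l hl => (h' l hl).symm), if_neg hP]; ring
    rw [Finset.sum_congr rfl (fun y _ => e y), ← Finset.sum_filter, filter_agree,
      Finset.sum_pair (hne x)]
    by_cases hxj : x j = true <;> simp [Function.update_self, sgn, hxj] <;> ring
  rw [step1, Finset.sum_congr rfl (fun x _ => step2 x), ← Finset.mul_sum]
  -- Step 3
  set A : (Fin d → Bool) → ℝ := fun x => f (Function.update x j true) with hA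
  set B : (Fin d → Bool) → ℝ := fun x => f (Function.update x j false) with hB
  have hAB : ∀ x, (A x - B x)^2 = 2 * (A x - B x) := by
    intro x
    have hle : B x ≤ A x := by
      apply hmono
      intro l
      by_cases hl : l = j
      · subst hl; simp [Function.update]
      · simp [Function.update, hl]
    rcases hval (Function.update x j true) with h1 | h1 <;>
      rcases hval (Function.update x j false) with h2 | h2 <;>
      simp only [hA, hB] at hle ⊢ <;> rw [h1, h2] <;> rw [h1, h2] at hle <;>
      (revert hle; norm_num)
  have hS1 : 2 * ∑ x : Fin d → Bool, f x * sgn (x j) * (A x - B x)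
      = ∑ x : Fin d → Bool, (A x - B x)^2 := by
    rw [pairsum d j (fun x => f x * sgn (x j) * (A x - B x))]
    refine Finset.sum_congr rfl fun x _ => ?_
    have eAT : A (Function.update x j true) = A x := by
      simp only [hA, Function.update_idem]
    have eAF : A (Function.update x j false) = A x := by
      simp only [hA, Function.update_idem]
    have eBT : B (Function.update x j true) = B x := by
      simp only [hB, Function.update_idem]
    have eBF : B (Function.update x j false) = B x := by
      simp only [hB, Function.update_idem]
    simp only [eAT, eAF, eBT, eBF, Function.update_self, sgn]
    norm_num
    ring
  have hS2 : 2 * ∑ x : Fin d → Bool, sgn (x j) * f x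
      = ∑ x : Fin d → Bool, (A x - B x) := by
    rw [pairsum d j (fun x => sgn (x j) * f x)]
    refine Finset.sum_congr rfl fun x _ => ?_
    simp only [hA, hB, Function.update_self, sgn]
    norm_num
    ring
  have key : ∑ x : Fin d → Bool, f x * sgn (x j) * (A x - B x)
      = 2 * ∑ x : Fin d → Bool, sgn (x j) * f x := by
    have : 2 * ∑ x : Fin d → Bool, f x * sgn (x j) * (A x - B x)
        = 2 * (2 * ∑ x : Fin d → Bool, sgn (x j) * f x) := by
      rw [hS1, hS2, Finset.sum_congr rfl (fun x _ => hAB x), Finset.mul_sum]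
    linarith
  rw [key]
  rw [show (2:ℝ)^d = 2^(d-1) * 2 by
    rw [← pow_succ]
    congr 1
    omega]
  ring


lemma chi_single (d : ℕ) (j : Fin d) (x : Fin d → Bool) :
    chi d (fun l => decide (l = j)) x = sgn (x j) := by
  rw [chi_eq]
  rw [Finset.prod_eq_single j
    (fun l _ hl => by simp [hl])
    (fun h => absurd (Finset.mem_univ j) h)]
  simp [sgn]

end Stmt14

theorem stmt14 (d : ℕ) (hd : 1 ≤ d)
    (f : (Fin d → Bool) → ℝ)
    (hval : ∀ x, f x = 1 ∨ f x = -1)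
    (hmono : ∀ x z : Fin d → Bool, (∀ j, x j ≤ z j) → f x ≤ f z)
    (k : ℕ) :
    ∑ α ∈ Finset.univ.filter
        (fun α : Fin d → Bool => k < (Finset.univ.filter fun j => α j = true).card),
      ((∑ x : Fin d → Bool, chi d α x * f x) / 2 ^ d) ^ 2
      ≤ Real.sqrt d / (k + 1) := by
  classical
  open Stmt14 in
  set Fh : (Fin d → Bool) → ℝ := fun α => (∑ x : Fin d → Bool, chi d α x * f x) / 2 ^ d
    with hFh
  have h2d : (0:ℝ) < 2 ^ d := by positivity
  -- Parseval
  have hP : ∑ α : Fin d → Bool, (Fh α)^2 = 1 := by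
    have h1 : ∑ x : Fin d → Bool, (f x)^2 = 2^d := by
      have : ∀ x : Fin d → Bool, (f x)^2 = 1 := by
        intro x; rcases hval x with h | h <;> rw [h] <;> norm_num
      rw [Finset.sum_congr rfl fun x _ => this x, Finset.sum_const, Finset.card_univ]
      simp [Fintype.card_fun]
    have h2 := Stmt14.parseval d f
    rw [h1] at h2
    have : ∀ α : Fin d → Bool, (Fh α)^2
        = (∑ x : Fin d → Bool, chi d α x * f x)^2 / (2^d * 2^d) := by
      intro α; simp only [hFh]; rw [div_pow, pow_two ((2:ℝ)^d)]
    rw [Finset.sum_congr rfl fun α _ => this α, ← Finset.sum_div, h2]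
    field_simp
  -- influence
  have hInf : ∀ j : Fin d,
      ∑ α ∈ Finset.univ.filter (fun α : Fin d → Bool => α j = true), (Fh α)^2
      = Fh (fun l => decide (l = j)) := by
    intro j
    have h2 := Stmt14.influence_raw d hd j f hval hmono
    have e1 : ∀ α : Fin d → Bool, (Fh α)^2
        = (∑ x : Fin d → Bool, chi d α x * f x)^2 / (2^d * 2^d) := by
      intro α; simp only [hFh]; rw [div_pow, pow_two ((2:ℝ)^d)]
    rw [Finset.sum_congr rfl fun α _ => e1 α, ← Finset.sum_div, h2]
    simp only [hFh]
    have e2 : ∑ x : Fin d → Bool, chi d (fun l => decide (l = j)) x * f x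
        = ∑ x : Fin d → Bool, sgn (x j) * f x :=
      Finset.sum_congr rfl fun x _ => by rw [Stmt14.chi_single]
    rw [e2]
    exact mul_div_mul_left _ _ (ne_of_gt h2d)
  -- weight identity
  have hW : ∑ α : Fin d → Bool,
        ((Finset.univ.filter fun j => α j = true).card : ℝ) * (Fh α)^2
      = ∑ j : Fin d, Fh (fun l => decide (l = j)) := by
    have e1 : ∀ α : Fin d → Bool,
        ((Finset.univ.filter fun j => α j = true).card : ℝ)
        = ∑ j : Fin d, (if α j = true then (1:ℝ) else 0) := by
      intro α
      rw [Finset.card_filter]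
      push_cast
      rfl
    have e2 : ∀ α : Fin d → Bool,
        ((Finset.univ.filter fun j => α j = true).card : ℝ) * (Fh α)^2
        = ∑ j : Fin d, (if α j = true then (Fh α)^2 else 0) := by
      intro α
      rw [e1, Finset.sum_mul]
      exact Finset.sum_congr rfl fun j _ => by split <;> ring
    rw [Finset.sum_congr rfl fun α _ => e2 α, Finset.sum_comm]
    refine Finset.sum_congr rfl fun j _ => ?_
    rw [← Finset.sum_filter, hInf j]
  -- Cauchy–Schwarz bound
  have hCS : ∑ j : Fin d, Fh (fun l => decide (l = j)) ≤ Real.sqrt d := by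
    set a : Fin d → ℝ := fun j => Fh (fun l => decide (l = j)) with ha
    have hinj : Function.Injective (fun j : Fin d => (fun l => decide (l = j))) := by
      intro j j' h
      have := congrFun h j
      simp at this
      exact this
    have hsub : ∑ j : Fin d, (a j)^2 ≤ 1 := by
      rw [← hP]
      have : ∑ j : Fin d, (a j)^2
          = ∑ α ∈ Finset.univ.image (fun j : Fin d => (fun l => decide (l = j))),
              (Fh α)^2 := by
        rw [Finset.sum_image (fun j _ j' _ h => hinj h)]
      rw [this]
      exact Finset.sum_le_sum_of_subset_of_nonneg (Finset.subset_univ _)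
        (fun α _ _ => sq_nonneg _)
    have hcs : (∑ j : Fin d, a j)^2 ≤ (d:ℝ) * ∑ j : Fin d, (a j)^2 := by
      have h := Finset.sum_mul_sq_le_sq_mul_sq Finset.univ (fun _ : Fin d => (1:ℝ)) a
      simpa [Finset.card_univ] using h
    calc ∑ j : Fin d, a j ≤ |∑ j : Fin d, a j| := le_abs_self _
      _ = Real.sqrt ((∑ j : Fin d, a j)^2) := (Real.sqrt_sq_eq_abs _).symm
      _ ≤ Real.sqrt d := by
          apply Real.sqrt_le_sqrt
          have hd0 : (0:ℝ) ≤ (d:ℝ) := Nat.cast_nonneg d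
          nlinarith
  -- final chain
  have hk : (0:ℝ) < (k:ℝ) + 1 := by positivity
  calc ∑ α ∈ Finset.univ.filter
        (fun α : Fin d → Bool => k < (Finset.univ.filter fun j => α j = true).card),
      (Fh α)^2
      ≤ ∑ α ∈ Finset.univ.filter
          (fun α : Fin d → Bool => k < (Finset.univ.filter fun j => α j = true).card),
        ((Finset.univ.filter fun j => α j = true).card : ℝ) / ((k:ℝ)+1) * (Fh α)^2 := by
        refine Finset.sum_le_sum fun α hα => ?_
        simp only [Finset.mem_filter, Finset.mem_univ, true_and] at hα
        have h1 : (1:ℝ) ≤ ((Finset.univ.filter fun j => α j = true).card : ℝ) / ((k:ℝ)+1) := by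
          rw [le_div_iff₀ hk]
          have : (k:ℝ) + 1 ≤ ((Finset.univ.filter fun j => α j = true).card : ℝ) := by
            exact_mod_cast Nat.succ_le_of_lt hα
          linarith
        nlinarith [sq_nonneg (Fh α)]
    _ ≤ ∑ α : Fin d → Bool,
        ((Finset.univ.filter fun j => α j = true).card : ℝ) / ((k:ℝ)+1) * (Fh α)^2 := by
        refine Finset.sum_le_sum_of_subset_of_nonneg (Finset.subset_univ _) fun α _ _ => ?_
        positivity
    _ = (1/((k:ℝ)+1)) * ∑ α : Fin d → Bool,
        ((Finset.univ.filter fun j => α j = true).card : ℝ) * (Fh α)^2 := by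
        rw [Finset.mul_sum]
        exact Finset.sum_congr rfl fun α _ => by ring
    _ = (1/((k:ℝ)+1)) * ∑ j : Fin d, Fh (fun l => decide (l = j)) := by rw [hW]
    _ ≤ (1/((k:ℝ)+1)) * Real.sqrt d := by
        apply mul_le_mul_of_nonneg_left hCS
        positivity
    _ = Real.sqrt d / (k + 1) := by ring
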